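/- Under the same hypotheses as for the acoustical metric ($M(v,v) = -1$, $0 < c \le 1$), the determinant of the induced spatial metric $g$ on $\Sigma_t$ is given by $\det g = \{c^2 - (c^2-1)(v^0)^2\}^3 \{c^{-6} + c^{-4}(c^{-2}-1)[(v^0)^2 - 1]\}$, and this quantity is strictly positive; moreover if additionally $c \ge c_0 > 0$ and $|v^i| \le V$ for all $i$, then $\det g$ is bounded above and below by positive constants depending only on $c_0$ and $V$. -/

import Mathlib

open Finset

/-- The induced spatial metric on `Σ_t`, as a `3 × 3` matrix:
`g_{ab} = {c⁻²δ_{ab} + (c⁻²-1)v^a v^b}{c² - (c²-1)(v⁰)²}`. -/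
noncomputable def gMat (c : ℝ) (v : Fin 4 → ℝ) : Matrix (Fin 3) (Fin 3) ℝ :=
  Matrix.of fun a b =>
    ((c ^ 2)⁻¹ * (if a = b then 1 else 0) + ((c ^ 2)⁻¹ - 1) * v a.succ * v b.succ) *
      (c ^ 2 - (c ^ 2 - 1) * (v 0) ^ 2)

set_option maxHeartbeats 1000000 in
lemma det_aux (c x y z s : ℝ) (hc : c ≠ 0) :
    (Matrix.of ![![((c^2)⁻¹ + ((c^2)⁻¹-1)*x*x)*s, (((c^2)⁻¹-1)*x*y)*s, (((c^2)⁻¹-1)*x*z)*s],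
      ![(((c^2)⁻¹-1)*y*x)*s, ((c^2)⁻¹ + ((c^2)⁻¹-1)*y*y)*s, (((c^2)⁻¹-1)*y*z)*s],
      ![(((c^2)⁻¹-1)*z*x)*s, (((c^2)⁻¹-1)*z*y)*s, ((c^2)⁻¹ + ((c^2)⁻¹-1)*z*z)*s]]).det
      = s ^ 3 * ((c ^ 6)⁻¹ + (c ^ 4)⁻¹ * ((c ^ 2)⁻¹ - 1) * (x^2 + y^2 + z^2)) := by
  have h2 : (c:ℝ)^2 ≠ 0 := pow_ne_zero _ hc
  simp [Matrix.det_fin_three]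
  field_simp
  ring

lemma det_g (c : ℝ) (v : Fin 4 → ℝ) (hc : c ≠ 0) :
    (gMat c v).det =
      (c ^ 2 - (c ^ 2 - 1) * (v 0) ^ 2) ^ 3 *
        ((c ^ 6)⁻¹ + (c ^ 4)⁻¹ * ((c ^ 2)⁻¹ - 1) *
          ((v (1:Fin 4))^2 + (v 2)^2 + (v 3)^2)) := by
  have : gMat c v = Matrix.of ![![((c^2)⁻¹ + ((c^2)⁻¹-1)*(v 1)*(v 1))*(c^2-(c^2-1)*(v 0)^2), (((c^2)⁻¹-1)*(v 1)*(v 2))*(c^2-(c^2-1)*(v 0)^2), (((c^2)⁻¹-1)*(v 1)*(v 3))*(c^2-(c^2-1)*(v 0)^2)],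
      ![(((c^2)⁻¹-1)*(v 2)*(v 1))*(c^2-(c^2-1)*(v 0)^2), ((c^2)⁻¹ + ((c^2)⁻¹-1)*(v 2)*(v 2))*(c^2-(c^2-1)*(v 0)^2), (((c^2)⁻¹-1)*(v 2)*(v 3))*(c^2-(c^2-1)*(v 0)^2)],
      ![(((c^2)⁻¹-1)*(v 3)*(v 1))*(c^2-(c^2-1)*(v 0)^2), (((c^2)⁻¹-1)*(v 3)*(v 2))*(c^2-(c^2-1)*(v 0)^2), ((c^2)⁻¹ + ((c^2)⁻¹-1)*(v 3)*(v 3))*(c^2-(c^2-1)*(v 0)^2)]] := by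
    ext a b
    fin_cases a <;> fin_cases b <;>
      simp [gMat, show ((0:Fin 3)).succ = (1:Fin 4) from rfl,
        show ((1:Fin 3)).succ = (2:Fin 4) from rfl, show ((2:Fin 3)).succ = (3:Fin 4) from rfl]
  rw [this, det_aux c (v 1) (v 2) (v 3) _ hc]

lemma sum_eq (v : Fin 4 → ℝ) :
    ∑ i : Fin 3, (v i.succ) ^ 2 = (v (1:Fin 4))^2 + (v 2)^2 + (v 3)^2 := by
  simp [Fin.sum_univ_three, show ((0:Fin 3)).succ = (1:Fin 4) from rfl,
    show ((1:Fin 3)).succ = (2:Fin 4) from rfl, show ((2:Fin 3)).succ = (3:Fin 4) from rfl]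


set_option maxHeartbeats 1000000 in
/-- explicit formula and positivity for `det g`, together with uniform
upper and lower bounds depending only on a lower bound `c₀` for the sound speed and an
upper bound `V` for the spatial velocity components. -/
theorem stmt3 :
    (∀ (c : ℝ) (v : Fin 4 → ℝ), 0 < c → c ≤ 1 →
      (-(v 0) ^ 2 + ∑ i : Fin 3, (v i.succ) ^ 2 = -1) →
      (gMat c v).det =
        (c ^ 2 - (c ^ 2 - 1) * (v 0) ^ 2) ^ 3 *
          ((c ^ 6)⁻¹ + (c ^ 4)⁻¹ * ((c ^ 2)⁻¹ - 1) * ((v 0) ^ 2 - 1)) ∧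
      0 < (gMat c v).det) ∧
    (∀ c₀ V : ℝ, 0 < c₀ →
      ∃ C₁ C₂ : ℝ, 0 < C₁ ∧ 0 < C₂ ∧
        ∀ (c : ℝ) (v : Fin 4 → ℝ), c₀ ≤ c → c ≤ 1 →
          (-(v 0) ^ 2 + ∑ i : Fin 3, (v i.succ) ^ 2 = -1) →
          (∀ i : Fin 3, |v i.succ| ≤ V) →
          C₁ ≤ (gMat c v).det ∧ (gMat c v).det ≤ C₂) := by
  
  -- key facts
  have key : ∀ (c : ℝ) (v : Fin 4 → ℝ), 0 < c → c ≤ 1 →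
      (-(v 0) ^ 2 + ∑ i : Fin 3, (v i.succ) ^ 2 = -1) →
      ∃ S : ℝ, S = (v (1:Fin 4))^2 + (v 2)^2 + (v 3)^2 ∧ 0 ≤ S ∧
        (v 0)^2 = 1 + S ∧
        (gMat c v).det = (1 + (1 - c^2) * S)^3 * ((c ^ 6)⁻¹ + (c ^ 4)⁻¹ * ((c ^ 2)⁻¹ - 1) * S) := by
    intro c v hc hc1 hv
    refine ⟨(v (1:Fin 4))^2 + (v 2)^2 + (v 3)^2, rfl, by positivity, ?_, ?_⟩
    · rw [sum_eq] at hv; linarith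
    · rw [sum_eq] at hv
      rw [det_g c v (ne_of_gt hc)]
      have h0 : (v 0)^2 = 1 + ((v (1:Fin 4))^2 + (v 2)^2 + (v 3)^2) := by linarith
      rw [h0]; congr 1 <;> ring
  constructor
  · intro c v hc hc1 hv
    obtain ⟨S, hSdef, hS0, hv0, hdet⟩ := key c v hc hc1 hv
    have hc2 : (0:ℝ) < c^2 := by positivity
    have hc6 : (0:ℝ) < (c^6)⁻¹ := by positivity
    have hcinv : 1 ≤ (c^2)⁻¹ := one_le_inv_iff₀.2 ⟨hc2, by nlinarith⟩
    have hF : 0 < (c ^ 6)⁻¹ + (c ^ 4)⁻¹ * ((c ^ 2)⁻¹ - 1) * S := by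
      have h4 : (0:ℝ) < (c^4)⁻¹ := by positivity
      have : 0 ≤ (c ^ 4)⁻¹ * ((c ^ 2)⁻¹ - 1) * S :=
        mul_nonneg (mul_nonneg h4.le (by linarith)) hS0
      linarith
    constructor
    · rw [hdet, hv0]; ring
    · rw [hdet]
      have hs : (0:ℝ) < 1 + (1 - c^2) * S := by
        nlinarith [mul_nonneg (by nlinarith : (0:ℝ) ≤ 1 - c^2) hS0]
      positivity
  · intro c₀ V hc₀
    refine ⟨1, (1 + 3 * V^2)^4 / c₀^6, one_pos, by positivity, ?_⟩
    intro c v hcc hc1 hv hVb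
    have hc : 0 < c := lt_of_lt_of_le hc₀ hcc
    obtain ⟨S, hSdef, hS0, hv0, hdet⟩ := key c v hc hc1 hv
    have hc2 : (0:ℝ) < c^2 := by positivity
    have hcinv : 1 ≤ (c^2)⁻¹ := one_le_inv_iff₀.2 ⟨hc2, by nlinarith⟩
    have hS3V : S ≤ 3 * V^2 := by
      have h1 := hVb 0; have h2 := hVb 1; have h3 := hVb 2
      rw [show ((0:Fin 3)).succ = (1:Fin 4) from rfl] at h1
      rw [show ((1:Fin 3)).succ = (2:Fin 4) from rfl] at h2
      rw [show ((2:Fin 3)).succ = (3:Fin 4) from rfl] at h3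
      have e1 : (v (1:Fin 4))^2 ≤ V^2 := by nlinarith [abs_nonneg (v (1:Fin 4)), sq_abs (v (1:Fin 4))]
      have e2 : (v (2:Fin 4))^2 ≤ V^2 := by nlinarith [abs_nonneg (v (2:Fin 4)), sq_abs (v (2:Fin 4))]
      have e3 : (v (3:Fin 4))^2 ≤ V^2 := by nlinarith [abs_nonneg (v (3:Fin 4)), sq_abs (v (3:Fin 4))]
      rw [hSdef]; linarith
    set s : ℝ := 1 + (1 - c^2) * S with hsdef
    set F : ℝ := (c ^ 6)⁻¹ + (c ^ 4)⁻¹ * ((c ^ 2)⁻¹ - 1) * S with hFdef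
    have hs1 : 1 ≤ s := by
      rw [hsdef]; nlinarith [mul_nonneg (by nlinarith : (0:ℝ) ≤ 1 - c^2) hS0]
    have hsU : s ≤ 1 + 3 * V^2 := by
      rw [hsdef]; nlinarith [mul_nonneg hc2.le hS0]
    have hF1 : 1 ≤ F := by
      have h6 : 1 ≤ (c^6)⁻¹ := one_le_inv_iff₀.2 ⟨by positivity, pow_le_one₀ hc.le hc1⟩
      have h4 : (0:ℝ) < (c^4)⁻¹ := by positivity
      have hnn : 0 ≤ (c ^ 4)⁻¹ * ((c ^ 2)⁻¹ - 1) * S :=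
        mul_nonneg (mul_nonneg h4.le (by linarith)) hS0
      rw [hFdef]; linarith
    have hc6inv : (c^6)⁻¹ ≤ (c₀^6)⁻¹ := by
      apply inv_anti₀ (by positivity)
      exact pow_le_pow_left₀ hc₀.le hcc 6
    have hFU : F ≤ (c₀^6)⁻¹ * (1 + 3 * V^2) := by
      rw [hFdef]
      have key2 : (c ^ 4)⁻¹ * ((c ^ 2)⁻¹ - 1) * S ≤ (c^6)⁻¹ * S := by
        have : (c ^ 4)⁻¹ * ((c ^ 2)⁻¹ - 1) ≤ (c^6)⁻¹ := by
          have h4 : (0:ℝ) < (c^4)⁻¹ := by positivity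
          have : (c ^ 4)⁻¹ * (c ^ 2)⁻¹ = (c^6)⁻¹ := by
            rw [← mul_inv]; congr 1; ring
          nlinarith
        nlinarith
      have hS6 : (c^6)⁻¹ * S ≤ (c₀^6)⁻¹ * (3*V^2) := by
        have := mul_le_mul hc6inv hS3V hS0 (by positivity : (0:ℝ) ≤ (c₀^6)⁻¹)
        linarith
      nlinarith
    rw [hdet]
    constructor
    · nlinarith [pow_le_pow_left₀ (by norm_num : (0:ℝ) ≤ 1) hs1 3]
    · rw [div_eq_mul_inv, show ((1:ℝ)+3*V^2)^4 = (1+3*V^2)^3 * (1+3*V^2) by ring]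
      have hV0 : (0:ℝ) ≤ 1 + 3*V^2 := by positivity
      have hs3 : s^3 ≤ (1+3*V^2)^3 := pow_le_pow_left₀ (by linarith) hsU 3
      have hF0 : 0 ≤ F := by linarith
      calc s^3 * F ≤ (1+3*V^2)^3 * F := by
            exact mul_le_mul_of_nonneg_right hs3 (by linarith)
        _ ≤ (1+3*V^2)^3 * ((c₀^6)⁻¹ * (1+3*V^2)) := by
            apply mul_le_mul_of_nonneg_left hFU (by positivity)
        _ = (1+3*V^2)^3 * (1+3*V^2) * (c₀^6)⁻¹ := by ring
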